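/- Let n be a positive natural number, let Φ₁, …, Φ_N be bare measurement channels on n×n complex matrices, and let Φ = Φ_N ∘ ⋯ ∘ Φ₁ (regarded as a complex-linear endomorphism of the space of n×n complex matrices). Then there is no invertible complex-linear map 𝒰 on n×n complex matrices such that 𝒰 ∘ Φ = (−Φ) ∘ 𝒰. (In other words, bare measurement feedback processes are incompatible with P symmetry.) -/

import Mathlib

open Matrix
open scoped ComplexOrder
set_option maxHeartbeats 1000000

/-- The positive semidefinite square root of a positive semidefinite matrix
(the definition of `Matrix.PosSemidef.sqrt` in the older Mathlib, since removed). -/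
noncomputable def Matrix.PosSemidef.sqrt {n 𝕜 : Type*} [Fintype n] [DecidableEq n] [RCLike 𝕜]
    {A : Matrix n n 𝕜} (hA : A.PosSemidef) : Matrix n n 𝕜 :=
  hA.1.eigenvectorUnitary.1 * diagonal ((↑) ∘ Real.sqrt ∘ hA.1.eigenvalues) *
  (star hA.1.eigenvectorUnitary : Matrix n n 𝕜)

/-- A bare measurement channel: `Φ(ρ) = Σ_α √E_α ρ √E_α` for some POVM `(E_α)`. -/
def IsBareChannel {n : ℕ}
    (Φ : Matrix (Fin n) (Fin n) ℂ → Matrix (Fin n) (Fin n) ℂ) : Prop :=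
  ∃ (k : ℕ) (E : Fin k → Matrix (Fin n) (Fin n) ℂ)
    (hE : ∀ α, (E α).PosSemidef),
      (∑ α, E α) = 1 ∧ ∀ ρ, Φ ρ = ∑ α, (hE α).sqrt * ρ * (hE α).sqrt

namespace StmtAux

variable {n : ℕ}

lemma psd_sqrt_psd {A : Matrix (Fin n) (Fin n) ℂ} (hA : A.PosSemidef) : hA.sqrt.PosSemidef := by
  unfold Matrix.PosSemidef.sqrt
  have hd : (diagonal ((RCLike.ofReal : ℝ → ℂ) ∘ Real.sqrt ∘ hA.1.eigenvalues) : Matrix (Fin n) (Fin n) ℂ).PosSemidef := by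
    apply Matrix.PosSemidef.diagonal
    intro i
    exact RCLike.ofReal_nonneg.2 (Real.sqrt_nonneg _)
  have := hd.mul_mul_conjTranspose_same (hA.1.eigenvectorUnitary : Matrix (Fin n) (Fin n) ℂ)
  rw [Matrix.star_eq_conjTranspose]
  exact this

lemma psd_sqrt_mul_self {A : Matrix (Fin n) (Fin n) ℂ} (hA : A.PosSemidef) :
    hA.sqrt * hA.sqrt = A := by
  unfold Matrix.PosSemidef.sqrt
  have hUU : (star hA.1.eigenvectorUnitary : Matrix (Fin n) (Fin n) ℂ) *
      (hA.1.eigenvectorUnitary : Matrix (Fin n) (Fin n) ℂ) = 1 :=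
    Unitary.star_mul_self_of_mem hA.1.eigenvectorUnitary.2
  have hDD : (diagonal ((RCLike.ofReal : ℝ → ℂ) ∘ Real.sqrt ∘ hA.1.eigenvalues) : Matrix (Fin n) (Fin n) ℂ) *
      diagonal ((RCLike.ofReal : ℝ → ℂ) ∘ Real.sqrt ∘ hA.1.eigenvalues) = diagonal (RCLike.ofReal ∘ hA.1.eigenvalues) := by
    rw [diagonal_mul_diagonal]
    congr 1
    funext i
    simp only [Function.comp_apply]
    rw [← RCLike.ofReal_mul, Real.mul_self_sqrt (hA.eigenvalues_nonneg i)]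
  conv_rhs => rw [hA.1.spectral_theorem]
  rw [Unitary.conjStarAlgAut_apply]
  simp only [Matrix.mul_assoc]
  rw [← Matrix.mul_assoc (star hA.1.eigenvectorUnitary : Matrix (Fin n) (Fin n) ℂ), hUU, Matrix.one_mul,
    ← Matrix.mul_assoc _ _ (star hA.1.eigenvectorUnitary : Matrix (Fin n) (Fin n) ℂ), hDD]

noncomputable def ip (X Y : Matrix (Fin n) (Fin n) ℂ) : ℝ :=
  (Matrix.trace (Xᴴ * Y)).re

lemma ip_self_eq (X : Matrix (Fin n) (Fin n) ℂ) :
    ip X X = ∑ i, ∑ j, Complex.normSq (X j i) := by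
  simp [ip, Matrix.trace, Matrix.mul_apply, Matrix.conjTranspose_apply,
    Matrix.diag, Complex.normSq_eq_conj_mul_self, Complex.normSq_apply]

lemma ip_self_nonneg (X : Matrix (Fin n) (Fin n) ℂ) : 0 ≤ ip X X := by
  rw [ip_self_eq]
  exact Finset.sum_nonneg fun i _ => Finset.sum_nonneg fun j _ => Complex.normSq_nonneg _

lemma eq_zero_of_ip_self (X : Matrix (Fin n) (Fin n) ℂ) (h : ip X X = 0) : X = 0 := by
  rw [ip_self_eq] at h
  ext i j
  have h1 : ∀ a ∈ Finset.univ, (0:ℝ) ≤ ∑ j : Fin n, Complex.normSq (X j a) := by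
    intro a _; exact Finset.sum_nonneg fun j _ => Complex.normSq_nonneg _
  have := (Finset.sum_eq_zero_iff_of_nonneg h1).1 h j (Finset.mem_univ _)
  have h2 : ∀ a ∈ Finset.univ, (0:ℝ) ≤ Complex.normSq (X a j) := by
    intro a _; exact Complex.normSq_nonneg _
  have := (Finset.sum_eq_zero_iff_of_nonneg h2).1 this i (Finset.mem_univ _)
  simpa using Complex.normSq_eq_zero.1 this

lemma ip_comm (X Y : Matrix (Fin n) (Fin n) ℂ) : ip X Y = ip Y X := by
  have : (Xᴴ * Y)ᴴ = Yᴴ * X := by simp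
  rw [ip, ip, ← this, Matrix.trace_conjTranspose]
  simp

lemma ip_sub_left (X Y Z : Matrix (Fin n) (Fin n) ℂ) : ip (X - Y) Z = ip X Z - ip Y Z := by
  simp [ip, Matrix.conjTranspose_sub, Matrix.sub_mul]

lemma ip_sub_right (X Y Z : Matrix (Fin n) (Fin n) ℂ) : ip X (Y - Z) = ip X Y - ip X Z := by
  simp [ip, Matrix.mul_sub]

lemma ip_neg_neg (X Y : Matrix (Fin n) (Fin n) ℂ) : ip (-X) (-Y) = ip X Y := by
  simp [ip]

lemma ip_sum_right {k : ℕ} (X : Matrix (Fin n) (Fin n) ℂ)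
    (f : Fin k → Matrix (Fin n) (Fin n) ℂ) :
    ip X (∑ α, f α) = ∑ α, ip X (f α) := by
  simp [ip, Matrix.mul_sum, Matrix.trace_sum]

lemma ip_sum_left {k : ℕ} (X : Matrix (Fin n) (Fin n) ℂ)
    (f : Fin k → Matrix (Fin n) (Fin n) ℂ) :
    ip (∑ α, f α) X = ∑ α, ip (f α) X := by
  rw [ip_comm, ip_sum_right]
  exact Finset.sum_congr rfl fun α _ => ip_comm _ _

/-- The properties of a channel we need. -/
structure Good (P : Matrix (Fin n) (Fin n) ℂ → Matrix (Fin n) (Fin n) ℂ) : Prop where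
  sub : ∀ X Y, P (X - Y) = P X - P Y
  sym : ∀ X Y, ip X (P Y) = ip (P X) Y
  pos : ∀ X, 0 ≤ ip X (P X)
  le1 : ∀ X, ip X (P X) ≤ ip X X
  contr : ∀ X, ip (P X) (P X) ≤ ip X X
  one : P 1 = 1

lemma Good.eq_of_norm_eq {P : Matrix (Fin n) (Fin n) ℂ → Matrix (Fin n) (Fin n) ℂ}
    (hP : Good P) (X : Matrix (Fin n) (Fin n) ℂ)
    (h : ip (P X) (P X) = ip X X) : P X = X := by
  set Z := X - P X with hZ
  have hPZ : P Z = P X - P (P X) := hP.sub X (P X)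
  have e1 : ip X (P (P X)) = ip X X := by
    rw [hP.sym X (P X)]; exact h
  have e2 : ip (P X) (P (P X)) ≤ ip X X := by
    calc ip (P X) (P (P X)) ≤ ip (P X) (P X) := hP.le1 (P X)
    _ = ip X X := h
  have hexp : ip Z (P Z) = ip X (P X) - ip X X - ip X X + ip (P X) (P (P X)) := by
    rw [hZ, hPZ, ip_sub_left, ip_sub_right, ip_sub_right, e1, h]
    ring
  have h1 : ip X X ≤ ip X (P X) := by
    have := hP.pos Z
    rw [hexp] at this
    linarith
  have h2 : ip X (P X) = ip X X := le_antisymm (hP.le1 X) h1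
  have hZZ : ip Z Z = 0 := by
    rw [hZ, ip_sub_left, ip_sub_right, ip_sub_right, h, h2, ip_comm (P X) X, h2]
    ring
  have := eq_zero_of_ip_self Z hZZ
  rw [hZ, sub_eq_zero] at this
  exact this.symm

/-- `foldl` with composition. -/
lemma foldl_comp (L : List (Matrix (Fin n) (Fin n) ℂ → Matrix (Fin n) (Fin n) ℂ))
    (acc : Matrix (Fin n) (Fin n) ℂ → Matrix (Fin n) (Fin n) ℂ) :
    L.foldl (fun f g => g ∘ f) acc = (L.foldl (fun f g => g ∘ f) id) ∘ acc := by
  induction L generalizing acc with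
  | nil => simp
  | cons P L ih =>
    simp only [List.foldl_cons]
    rw [ih (P ∘ acc), ih (P ∘ id)]
    rfl

lemma contr_foldl (L : List (Matrix (Fin n) (Fin n) ℂ → Matrix (Fin n) (Fin n) ℂ))
    (hL : ∀ P ∈ L, Good P) (v : Matrix (Fin n) (Fin n) ℂ) :
    ip (L.foldl (fun f g => g ∘ f) id v) (L.foldl (fun f g => g ∘ f) id v) ≤ ip v v := by
  induction L generalizing v with
  | nil => simp
  | cons P L ih =>
    have h1 : (P :: L).foldl (fun f g => g ∘ f) id v
        = L.foldl (fun f g => g ∘ f) id (P v) := by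
      simp only [List.foldl_cons]
      rw [foldl_comp L (P ∘ id)]
      rfl
    rw [h1]
    calc ip (L.foldl (fun f g => g ∘ f) id (P v)) (L.foldl (fun f g => g ∘ f) id (P v))
        ≤ ip (P v) (P v) := ih (fun Q hQ => hL Q (List.mem_cons_of_mem _ hQ)) (P v)
      _ ≤ ip v v := (hL P (List.mem_cons_self)).contr v

lemma one_foldl (L : List (Matrix (Fin n) (Fin n) ℂ → Matrix (Fin n) (Fin n) ℂ))
    (hL : ∀ P ∈ L, Good P) :
    L.foldl (fun f g => g ∘ f) id 1 = 1 := by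
  induction L with
  | nil => simp
  | cons P L ih =>
    have h1 : (P :: L).foldl (fun f g => g ∘ f) id (1 : Matrix (Fin n) (Fin n) ℂ)
        = L.foldl (fun f g => g ∘ f) id (P 1) := by
      simp only [List.foldl_cons]
      rw [foldl_comp L (P ∘ id)]
      rfl
    rw [h1, (hL P (List.mem_cons_self)).one]
    exact ih fun Q hQ => hL Q (List.mem_cons_of_mem _ hQ)

lemma key (L : List (Matrix (Fin n) (Fin n) ℂ → Matrix (Fin n) (Fin n) ℂ))
    (hL : ∀ P ∈ L, Good P) (v : Matrix (Fin n) (Fin n) ℂ)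
    (hv : L.foldl (fun f g => g ∘ f) id v = -v) : v = 0 := by
  induction L generalizing v with
  | nil =>
    simp only [List.foldl_nil, id_eq] at hv
    have h2 : (2 : ℂ) • v = 0 := by
      rw [two_smul]
      nth_rewrite 1 [hv]
      simp
    simpa using (smul_eq_zero.1 h2).resolve_left (by norm_num)
  | cons P L ih =>
    have hPgood := hL P (List.mem_cons_self)
    have hLgood : ∀ Q ∈ L, Good Q := fun Q hQ => hL Q (List.mem_cons_of_mem _ hQ)
    have h1 : (P :: L).foldl (fun f g => g ∘ f) id v
        = L.foldl (fun f g => g ∘ f) id (P v) := by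
      simp only [List.foldl_cons]
      rw [foldl_comp L (P ∘ id)]
      rfl
    rw [h1] at hv
    have hch : ip v v ≤ ip (P v) (P v) := by
      calc ip v v = ip (-v) (-v) := (ip_neg_neg v v).symm
        _ = ip (L.foldl (fun f g => g ∘ f) id (P v)) (L.foldl (fun f g => g ∘ f) id (P v)) := by
            rw [hv]
        _ ≤ ip (P v) (P v) := contr_foldl L hLgood (P v)
    have heq : ip (P v) (P v) = ip v v := le_antisymm (hPgood.contr v) hch
    have hfix : P v = v := hPgood.eq_of_norm_eq v heq
    rw [hfix] at hv
    exact ih hLgood v hv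

/-- A channel given by hermitian PSD Kraus operators squaring-summing to 1 is Good. -/
lemma good_of_kraus {k : ℕ} {P : Matrix (Fin n) (Fin n) ℂ → Matrix (Fin n) (Fin n) ℂ}
    (B : Fin k → Matrix (Fin n) (Fin n) ℂ) (hB : ∀ α, (B α).PosSemidef)
    (hsumB : (∑ α, B α * B α) = 1)
    (hP : ∀ ρ, P ρ = ∑ α, B α * ρ * B α) : Good P := by
  have hBH : ∀ α, (B α)ᴴ = B α := fun α => (hB α).1
  -- trace identities
  have tr_sq_left : ∀ X : Matrix (Fin n) (Fin n) ℂ,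
      (∑ α, ip (B α * X) (B α * X)) = ip X X := by
    intro X
    have : ∀ α, ip (B α * X) (B α * X) = (Matrix.trace (Xᴴ * ((B α * B α) * X))).re := by
      intro α
      rw [ip, Matrix.conjTranspose_mul, hBH]
      congr 2
      noncomm_ring
    rw [Finset.sum_congr rfl fun α _ => this α, ← Complex.re_sum, ← Matrix.trace_sum,
      ← Matrix.mul_sum, ← Finset.sum_mul, hsumB]
    simp [ip]
  have tr_sq_right : ∀ X : Matrix (Fin n) (Fin n) ℂ,
      (∑ α, ip (X * B α) (X * B α)) = ip X X := by
    intro X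
    have : ∀ α, ip (X * B α) (X * B α) = (Matrix.trace (Xᴴ * X * (B α * B α))).re := by
      intro α
      rw [ip, Matrix.conjTranspose_mul, hBH]
      rw [show (B α * Xᴴ) * (X * B α) = B α * ((Xᴴ * X) * B α) by noncomm_ring,
        Matrix.trace_mul_comm]
      congr 2
      noncomm_ring
    rw [Finset.sum_congr rfl fun α _ => this α, ← Complex.re_sum, ← Matrix.trace_sum,
      ← Matrix.mul_sum, hsumB]
    simp [ip]
  refine ⟨?_, ?_, ?_, ?_, ?_, ?_⟩
  · -- sub
    intro X Y
    rw [hP, hP, hP, ← Finset.sum_sub_distrib]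
    exact Finset.sum_congr rfl fun α _ => by noncomm_ring
  · -- sym
    intro X Y
    rw [hP Y, hP X, ip_sum_right, ip_sum_left]
    refine Finset.sum_congr rfl fun α _ => ?_
    rw [ip, ip]
    congr 1
    have hct : (B α * X * B α)ᴴ = B α * Xᴴ * B α := by
      simp [Matrix.conjTranspose_mul, hBH, Matrix.mul_assoc]
    calc Matrix.trace (Xᴴ * (B α * Y * B α))
        = Matrix.trace ((Xᴴ * (B α * Y)) * B α) := by congr 1; noncomm_ring
      _ = Matrix.trace (B α * (Xᴴ * (B α * Y))) := (Matrix.trace_mul_comm _ _).symm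
      _ = Matrix.trace ((B α * X * B α)ᴴ * Y) := by rw [hct]; congr 1; noncomm_ring
  · -- pos
    intro X
    rw [hP, ip_sum_right]
    refine Finset.sum_nonneg fun α _ => ?_
    set C : Matrix (Fin n) (Fin n) ℂ := (hB α).sqrt with hCdef
    have hCH : Cᴴ = C := (psd_sqrt_psd (hB α)).1
    have hCC : C * C = B α := psd_sqrt_mul_self (hB α)
    clear_value C
    have hips : ip X (B α * X * B α) = ip (C * X * C) (C * X * C) := by
      rw [ip, ip]
      congr 1
      have hct : (C * X * C)ᴴ = C * Xᴴ * C := by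
        simp [Matrix.conjTranspose_mul, hCH, Matrix.mul_assoc]
      calc Matrix.trace (Xᴴ * (B α * X * B α))
          = Matrix.trace (Xᴴ * ((C * C) * X * (C * C))) := by rw [hCC]
        _ = Matrix.trace ((Xᴴ * (C * C) * X * C) * C) := by congr 1; noncomm_ring
        _ = Matrix.trace (C * (Xᴴ * (C * C) * X * C)) := (Matrix.trace_mul_comm _ _).symm
        _ = Matrix.trace ((C * X * C)ᴴ * (C * X * C)) := by rw [hct]; congr 1; noncomm_ring
    rw [hips]
    exact ip_self_nonneg _
  · -- le1
    intro X
    have hD : ∀ α : Fin k, ip (B α * X - X * B α) (B α * X - X * B α)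
        = ip (B α * X) (B α * X) + ip (X * B α) (X * B α)
          - 2 * ip X (B α * X * B α) := by
      intro α
      rw [ip_sub_left, ip_sub_right, ip_sub_right]
      have c1 : ip (B α * X) (X * B α) = ip X (B α * X * B α) := by
        rw [ip, ip]
        congr 1
        rw [Matrix.conjTranspose_mul, hBH]
        congr 1
        noncomm_ring
      have c2 : ip (X * B α) (B α * X) = ip X (B α * X * B α) := by
        rw [ip, ip]
        congr 1
        calc Matrix.trace ((X * B α)ᴴ * (B α * X))
            = Matrix.trace ((B α * Xᴴ) * (B α * X)) := by
              rw [Matrix.conjTranspose_mul, hBH]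
          _ = Matrix.trace (B α * (Xᴴ * (B α * X))) := by congr 1; noncomm_ring
          _ = Matrix.trace ((Xᴴ * (B α * X)) * B α) := Matrix.trace_mul_comm _ _
          _ = Matrix.trace (Xᴴ * (B α * X * B α)) := by congr 1; noncomm_ring
      rw [c1, c2]
      ring
    have hPip : ip X (P X) = ∑ α, ip X (B α * X * B α) := by rw [hP, ip_sum_right]
    have hnn : (0:ℝ) ≤ ∑ α, (ip (B α * X) (B α * X) + ip (X * B α) (X * B α)
        - 2 * ip X (B α * X * B α)) := by
      have h0 := Finset.sum_nonneg
        (fun α (_ : α ∈ Finset.univ) => ip_self_nonneg (B α * X - X * B α))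
      rwa [Finset.sum_congr rfl fun α _ => hD α] at h0
    rw [Finset.sum_sub_distrib, Finset.sum_add_distrib, ← Finset.mul_sum] at hnn
    rw [tr_sq_left X, tr_sq_right X, ← hPip] at hnn
    linarith
  · -- contr
    intro X
    have ip_le_avg : ∀ a b : Matrix (Fin n) (Fin n) ℂ,
        ip a b ≤ (ip a a + ip b b) / 2 := by
      intro a b
      have h := ip_self_nonneg (a - b)
      rw [ip_sub_left, ip_sub_right, ip_sub_right, ip_comm b a] at h
      linarith
    have hPX : ip (P X) (P X) = ∑ α, ∑ β, ip (B α * X * B α) (B β * X * B β) := by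
      rw [hP, ip_sum_left]
      exact Finset.sum_congr rfl fun α _ => ip_sum_right _ _
    have hterm : ∀ α β : Fin k, ip (B α * X * B α) (B β * X * B β)
        = ip ((B β * B α) * X) (X * (B β * B α)) := by
      intro α β
      rw [ip, ip]
      congr 1
      have h1 : (B α * X * B α)ᴴ = B α * Xᴴ * B α := by
        simp [Matrix.conjTranspose_mul, hBH, Matrix.mul_assoc]
      have h2 : ((B β * B α) * X)ᴴ = Xᴴ * (B α * B β) := by
        simp [Matrix.conjTranspose_mul, hBH, Matrix.mul_assoc]
      calc Matrix.trace ((B α * X * B α)ᴴ * (B β * X * B β))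
          = Matrix.trace ((B α * Xᴴ * B α) * (B β * X * B β)) := by rw [h1]
        _ = Matrix.trace (B α * (Xᴴ * (B α * B β) * (X * B β))) := by
            congr 1; noncomm_ring
        _ = Matrix.trace ((Xᴴ * (B α * B β) * (X * B β)) * B α) := Matrix.trace_mul_comm _ _
        _ = Matrix.trace ((Xᴴ * (B α * B β)) * (X * (B β * B α))) := by
            congr 1; noncomm_ring
        _ = Matrix.trace (((B β * B α) * X)ᴴ * (X * (B β * B α))) := by rw [h2]
    have hu : ∑ α : Fin k, ∑ β : Fin k,
        ip ((B β * B α) * X) ((B β * B α) * X) = ip X X := by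
      have h1 : ∀ α : Fin k, ∑ β : Fin k, ip ((B β * B α) * X) ((B β * B α) * X)
          = ip (B α * X) (B α * X) := by
        intro α
        have := tr_sq_left (B α * X)
        simpa [Matrix.mul_assoc] using this
      rw [Finset.sum_congr rfl fun α _ => h1 α]
      exact tr_sq_left X
    have hv : ∑ α : Fin k, ∑ β : Fin k,
        ip (X * (B β * B α)) (X * (B β * B α)) = ip X X := by
      rw [Finset.sum_comm]
      have h1 : ∀ β : Fin k, ∑ α : Fin k, ip (X * (B β * B α)) (X * (B β * B α))
          = ip (X * B β) (X * B β) := by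
        intro β
        have := tr_sq_right (X * B β)
        simpa [← Matrix.mul_assoc] using this
      rw [Finset.sum_congr rfl fun β _ => h1 β]
      exact tr_sq_right X
    have hle : ip (P X) (P X) ≤ ∑ α : Fin k, ∑ β : Fin k,
        (ip ((B β * B α) * X) ((B β * B α) * X)
          + ip (X * (B β * B α)) (X * (B β * B α))) / 2 := by
      rw [hPX, Finset.sum_congr rfl fun α _ =>
        Finset.sum_congr rfl fun β _ => hterm α β]
      exact Finset.sum_le_sum fun α _ => Finset.sum_le_sum fun β _ => ip_le_avg _ _
    have hsplit : ∑ α : Fin k, ∑ β : Fin k,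
        (ip ((B β * B α) * X) ((B β * B α) * X)
          + ip (X * (B β * B α)) (X * (B β * B α))) / 2
        = ((∑ α : Fin k, ∑ β : Fin k, ip ((B β * B α) * X) ((B β * B α) * X))
          + ∑ α : Fin k, ∑ β : Fin k, ip (X * (B β * B α)) (X * (B β * B α))) / 2 := by
      rw [Finset.sum_congr rfl fun (α : Fin k) (_ : α ∈ Finset.univ) =>
          (by rw [← Finset.sum_add_distrib, ← Finset.sum_div] :
            ∑ β : Fin k, (ip ((B β * B α) * X) ((B β * B α) * X)
              + ip (X * (B β * B α)) (X * (B β * B α))) / 2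
            = ((∑ β : Fin k, ip ((B β * B α) * X) ((B β * B α) * X))
              + ∑ β : Fin k, ip (X * (B β * B α)) (X * (B β * B α))) / 2),
        ← Finset.sum_add_distrib, ← Finset.sum_div]
    rw [hsplit, hu, hv] at hle
    linarith
  · -- one
    rw [hP]
    calc (∑ α, B α * 1 * B α) = ∑ α, B α * B α := by
          exact Finset.sum_congr rfl fun α _ => by rw [Matrix.mul_one]
      _ = 1 := hsumB

/-- Every bare channel is Good. -/
lemma isBareChannel_good {P : Matrix (Fin n) (Fin n) ℂ → Matrix (Fin n) (Fin n) ℂ}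
    (h : IsBareChannel P) : Good P := by
  obtain ⟨k, E, hE, hsum, hP⟩ := h
  refine good_of_kraus (fun α => (hE α).sqrt) (fun α => psd_sqrt_psd (hE α)) ?_ hP
  rw [Finset.sum_congr rfl fun α _ => psd_sqrt_mul_self (hE α)]
  exact hsum

end StmtAux

theorem stmt_8 (n N : ℕ) (hn : 0 < n)
    (Φs : Fin N → (Matrix (Fin n) (Fin n) ℂ → Matrix (Fin n) (Fin n) ℂ))
    (hbare : ∀ i, IsBareChannel (Φs i))
    (Φ : Matrix (Fin n) (Fin n) ℂ → Matrix (Fin n) (Fin n) ℂ)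
    (hΦ : Φ = (List.ofFn Φs).foldl (fun f g => g ∘ f) id) :
    ¬ ∃ U : Matrix (Fin n) (Fin n) ℂ →ₗ[ℂ] Matrix (Fin n) (Fin n) ℂ,
        Function.Bijective U ∧ ∀ ρ, U (Φ ρ) = -(Φ (U ρ)) := by
  rintro ⟨U, hbij, hcomm⟩
  have hgood : ∀ P ∈ List.ofFn Φs, StmtAux.Good P := by
    intro P hP
    rw [List.mem_ofFn] at hP
    obtain ⟨i, rfl⟩ := hP
    exact StmtAux.isBareChannel_good (hbare i)
  have hone : Φ 1 = 1 := by
    rw [hΦ]; exact StmtAux.one_foldl _ hgood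
  have h1 := hcomm 1
  rw [hone] at h1
  -- h1 : U 1 = -(Φ (U 1))
  have hv : Φ (U 1) = -(U 1) := by rw [← neg_eq_iff_eq_neg] at h1; rw [← h1]
  have hv0 : U 1 = 0 := by
    rw [hΦ] at hv
    exact StmtAux.key _ hgood _ hv
  have h10 : (1 : Matrix (Fin n) (Fin n) ℂ) = 0 := by
    apply hbij.1
    rw [hv0, map_zero]
  have := congrFun (congrFun h10 ⟨0, hn⟩) ⟨0, hn⟩
  simp [Matrix.one_apply_eq] at this
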